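/- Let D be a connected graph and b ∈ V(D). With 𝒦 the set of cliques of D \ {b} whose canonical separation has maximal side A(K), define β(D,b) = ⋂_{K ∈ 𝒦} (B(K) ∪ C(K)). Then b ∈ β(D,b), and for every connected component F of D \ β(D,b) there exists K ∈ 𝒦 with F ⊆ A(K); in particular N(F) is a clique. -/
import Mathlib

/-- The component `B(K)` of `D \ K` containing `b`. -/
def bComp {V : Type*} (G : SimpleGraph V) (b : V) (K : Set V) : Set V :=
  {v : V | ∃ (hv : v ∈ Kᶜ) (hb : b ∈ Kᶜ), (G.induce Kᶜ).Reachable ⟨b, hb⟩ ⟨v, hv⟩}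

/-- `C(K) = N(B(K))`. -/
def cSet {V : Type*} (G : SimpleGraph V) (b : V) (K : Set V) : Set V :=
  {v : V | v ∉ bComp G b K ∧ ∃ u ∈ bComp G b K, G.Adj u v}

/-- `A(K) = V(D) \ (B(K) ∪ C(K))`. -/
def aSet {V : Type*} (G : SimpleGraph V) (b : V) (K : Set V) : Set V :=
  (bComp G b K ∪ cSet G b K)ᶜ

/-- `K` is a clique not containing `b` whose canonical separation has `A(K)` maximal. -/
def IsMaxSep {V : Type*} (G : SimpleGraph V) (b : V) (K : Set V) : Prop :=
  G.IsClique K ∧ b ∉ K ∧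
    ∀ K' : Set V, G.IsClique K' → b ∉ K' → ¬ (aSet G b K ⊂ aSet G b K')

/-- The central bag `β(D,b) = ⋂_{K maximal} (B(K) ∪ C(K))`. -/
def betaSet {V : Type*} (G : SimpleGraph V) (b : V) : Set V :=
  {v : V | ∀ K : Set V, IsMaxSep G b K → v ∈ bComp G b K ∪ cSet G b K}

section Helpers

variable {V : Type*} {G : SimpleGraph V} {b : V} {K K' : Set V}

lemma mem_bComp_self (hb : b ∉ K) : b ∈ bComp G b K :=
  ⟨hb, hb, SimpleGraph.Reachable.refl _⟩

lemma bComp_subset_compl : bComp G b K ⊆ Kᶜ := fun _ hv => hv.1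

lemma bComp_step {u v : V} (hu : u ∈ bComp G b K) (h : G.Adj u v) (hv : v ∉ K) :
    v ∈ bComp G b K := by
  obtain ⟨hu', hb, r⟩ := hu
  refine ⟨hv, hb, r.trans (SimpleGraph.Adj.reachable ?_)⟩
  exact h

lemma adj_mem_union {u v : V} (hu : u ∈ bComp G b K) (h : G.Adj u v) :
    v ∈ bComp G b K ∪ cSet G b K := by
  by_cases hv : v ∈ bComp G b K
  · exact Or.inl hv
  · exact Or.inr ⟨hv, u, hu, h⟩

lemma cSet_subset : cSet G b K ⊆ K := by
  rintro v ⟨hvB, u, hu, hadj⟩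
  by_contra hvK
  exact hvB (bComp_step hu hadj hvK)

/-- Walk induction: a property closed along edges inside `s` propagates. -/
lemma walk_ind {s : Set V} {Q : V → Prop}
    (hQ : ∀ u, u ∈ s → Q u → ∀ v, v ∈ s → G.Adj u v → Q v) :
    ∀ {x y : ↥s}, (G.induce s).Walk x y → Q x → Q y := by
  intro x y w
  induction w with
  | nil => exact id
  | @cons a c d h p ih =>
      intro hx
      exact ih (hQ a a.2 hx c c.2 h)

lemma bComp_subset_of_closed {P S : Set V} (hbP : b ∉ P) (hbS : b ∈ S)
    (hcl : ∀ u, u ∈ S → u ∈ bComp G b P → ∀ v, G.Adj u v → v ∉ P → v ∈ S) :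
    bComp G b P ⊆ S := by
  rintro v ⟨hv, hb, r⟩
  obtain ⟨w⟩ := r
  have := walk_ind (G := G) (s := Pᶜ) (Q := fun v => v ∈ S ∧ v ∈ bComp G b P)
    (fun u hu hQu v hvP hadj => ⟨hcl u hQu.1 hQu.2 v hadj hvP, bComp_step hQu.2 hadj hvP⟩)
    w ⟨hbS, mem_bComp_self hbP⟩
  exact this.1

lemma bComp_cSet_eq (hb : b ∉ K) : bComp G b (cSet G b K) = bComp G b K := by
  have hbC : b ∉ cSet G b K := fun h => h.1 (mem_bComp_self hb)
  apply Set.Subset.antisymm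
  · -- bComp (cSet K) ⊆ bComp K
    apply bComp_subset_of_closed hbC (mem_bComp_self hb)
    intro u hu _ v hadj hvC
    rcases adj_mem_union hu hadj with h | h
    · exact h
    · exact absurd h hvC
  · -- bComp K ⊆ bComp (cSet K)
    apply bComp_subset_of_closed hb (mem_bComp_self hbC)
    intro u hu _ v hadj hvK
    exact bComp_step hu hadj (fun h => hvK (cSet_subset h))

lemma cSet_cSet (hb : b ∉ K) : cSet G b (cSet G b K) = cSet G b K := by
  show {v | v ∉ bComp G b (cSet G b K) ∧ ∃ u ∈ bComp G b (cSet G b K), G.Adj u v} = _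
  rw [bComp_cSet_eq hb]
  rfl

/-- Key lemma: for two maximal cliques, `C(K) ∩ A(K') = ∅`. -/
lemma key_lemma (hK : IsMaxSep G b K) (hK' : IsMaxSep G b K') {x : V}
    (hx : x ∈ cSet G b K) (hx' : x ∈ aSet G b K') : False := by
  obtain ⟨hKc, hKb, hKm⟩ := hK
  obtain ⟨hK'c, hK'b, hK'm⟩ := hK'
  -- cSet K ∩ bComp K' = ∅
  have hCB' : ∀ y ∈ cSet G b K, y ∉ bComp G b K' := by
    intro y hy hyB'
    have hne : y ≠ x := by
      rintro rfl
      exact hx' (Or.inl hyB')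
    have hadj : G.Adj y x := hKc (cSet_subset hy) (cSet_subset hx) hne
    exact hx' (adj_mem_union hyB' hadj)
  -- bComp K' ⊆ bComp K
  have hB'B : bComp G b K' ⊆ bComp G b K := by
    have hbC : b ∉ cSet G b K := fun h => h.1 (mem_bComp_self hKb)
    have h1 : bComp G b K' ⊆ bComp G b (cSet G b K) := by
      apply bComp_subset_of_closed hK'b (mem_bComp_self hbC)
      intro u huS huB' v hadj hvK'
      rcases adj_mem_union (K := cSet G b K) huS hadj with h | h
      · exact h
      · rw [cSet_cSet hKb] at h
        exact absurd (bComp_step huB' hadj hvK') (hCB' v h)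
    rwa [bComp_cSet_eq hKb] at h1
  -- aSet K ⊆ aSet K'
  have hAA' : aSet G b K ⊆ aSet G b K' := by
    intro v hv
    rintro (h | h)
    · exact hv (Or.inl (hB'B h))
    · obtain ⟨_, u, hu, hadj⟩ := h
      exact hv (adj_mem_union (hB'B hu) hadj)
  refine hKm K' hK'c hK'b ⟨hAA', fun hsub => ?_⟩
  exact (hsub hx') (Or.inr hx)

lemma cSet_subset_beta (hK : IsMaxSep G b K) : cSet G b K ⊆ betaSet G b := by
  intro v hv K' hK'
  by_contra h
  exact key_lemma hK hK' hv h

end Helpers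

/-- `b ∈ β(D,b)`, and every connected component `F` of `D \ β(D,b)` satisfies
`F ⊆ A(K)` for some maximal `K`; in particular `N(F)` is a clique. -/
theorem stmt_11 {V : Type*} (G : SimpleGraph V) (hG : G.Connected) (b : V) :
    b ∈ betaSet G b ∧
      ∀ F : Set V, F.Nonempty → F ⊆ (betaSet G b)ᶜ → (G.induce F).Connected →
        (∀ u ∈ F, ∀ v : V, G.Adj u v → v ∉ betaSet G b → v ∈ F) →
        (∃ K : Set V, IsMaxSep G b K ∧ F ⊆ aSet G b K) ∧
          G.IsClique {v : V | v ∉ F ∧ ∃ u ∈ F, G.Adj u v} := by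
  constructor
  · intro K hK
    exact Or.inl (mem_bComp_self hK.2.1)
  · intro F hFne hFbeta hFconn hFcl
    obtain ⟨f, hf⟩ := hFne
    have hfb : f ∉ betaSet G b := hFbeta hf
    simp only [betaSet, Set.mem_setOf_eq, not_forall] at hfb
    obtain ⟨K, hK, hfK⟩ := hfb
    have hfA : f ∈ aSet G b K := hfK
    -- F ⊆ aSet K
    have hFA : F ⊆ aSet G b K := by
      intro v hv
      obtain ⟨w⟩ := hFconn.preconnected ⟨f, hf⟩ ⟨v, hv⟩
      refine walk_ind (G := G) (s := F) (Q := fun v => v ∈ aSet G b K) ?_ w hfA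
      intro u huF huA z hzF hadj
      rintro (h | h)
      · exact huA (adj_mem_union h hadj.symm)
      · exact hFbeta hzF (cSet_subset_beta hK h)
    refine ⟨⟨K, hK, hFA⟩, ?_⟩
    -- N(F) ⊆ cSet K, hence a clique
    have hNF : {v : V | v ∉ F ∧ ∃ u ∈ F, G.Adj u v} ⊆ cSet G b K := by
      rintro v ⟨hvF, u, huF, hadj⟩
      have hvbeta : v ∈ betaSet G b := by
        by_contra h
        exact hvF (hFcl u huF v hadj h)
      rcases hvbeta K hK with h | h
      · exact absurd (adj_mem_union h hadj.symm) (hFA huF)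
      · exact h
    intro x hx y hy hne
    exact hK.1 (cSet_subset (hNF hx)) (cSet_subset (hNF hy)) hne
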